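/- In the 3DM-gadget NTU LP game, there exists a blocking coalition S ⊆ H ∪ T against the all-ones utility vector u* (i.e., a nonempty S and x ∈ ℝ^{m+1} with x ≥ 0, Σ_{j=1}^{m+1} x_j ≤ |S|, and (v^i)ᵀ x > 1 for all i ∈ S) if and only if the hypergraph (H, T) contains a three-dimensional perfect matching, i.e., a subcollection T' ⊆ T of n edges such that each node h ∈ H is contained in exactly one edge of T'. -/

import Mathlib

open Finset

/-- Membership of a node in a (hyper)edge given as a triple. -/
def memEdge {V : Type*} (h : V) (t : V × V × V) : Prop :=
  h = t.1 ∨ h = t.2.1 ∨ h = t.2.2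

instance {V : Type*} [DecidableEq V] (h : V) (t : V × V × V) : Decidable (memEdge h t) := by
  unfold memEdge; infer_instance

/-- The valuations in the 3DM-gadget NTU LP game.  Players are node players
(elements of `Hset`) or edge players (indices `Fin m` of edges `T`); goods are the
`m` edge goods together with one extra good. -/
noncomputable def gadgetVal {V : Type*} [DecidableEq V] (n m : ℕ)
    (Hset : Finset V) (T : Fin m → V × V × V) :
    ({h : V // h ∈ Hset} ⊕ Fin m) → (Fin m ⊕ Unit) → ℝ
  | Sum.inl h, Sum.inl j =>
      if memEdge h.1 (T j) then 1 / (4 * (n : ℝ) - 1)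
      else (1 / (4 * (n : ℝ))) * (1 - 1 / (2 * ((n : ℝ) - 1) * (4 * (n : ℝ) - 1)))
  | Sum.inl _, Sum.inr _ => 1 / (3 * (n : ℝ) + (m : ℝ))
  | Sum.inr e, Sum.inl j => if j = e then (n : ℝ) / (4 * (n : ℝ) - 1) else 0
  | Sum.inr _, Sum.inr _ => 1 / (3 * (n : ℝ) + (m : ℝ))

/-- A coalition `S` of the 3DM-gadget game blocks the all-ones utility vector `u*`
if some `x ∈ X(S)` (i.e. `x ≥ 0` with `∑ⱼ xⱼ ≤ |S|`) gives every member of `S`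
utility strictly greater than `1`. -/
noncomputable def blocksAllOnes {V : Type*} [DecidableEq V] (n m : ℕ)
    (Hset : Finset V) (T : Fin m → V × V × V)
    (S : Finset ({h : V // h ∈ Hset} ⊕ Fin m)) : Prop :=
  ∃ x : Fin m ⊕ Unit → ℝ, (∀ j, 0 ≤ x j) ∧ (∑ j, x j) ≤ (S.card : ℝ) ∧
    ∀ i ∈ S, (1 : ℝ) < ∑ j, gadgetVal n m Hset T i j * x j

/-- value of an edge good for an incident node player -/
noncomputable def rc (n : ℕ) : ℝ := 1 / (4 * (n : ℝ) - 1)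
/-- value of an edge good for a non-incident node player -/
noncomputable def cc (n : ℕ) : ℝ :=
  (1 / (4 * (n : ℝ))) * (1 - 1 / (2 * ((n : ℝ) - 1) * (4 * (n : ℝ) - 1)))
/-- value of the extra good -/
noncomputable def qc (n m : ℕ) : ℝ := 1 / (3 * (n : ℝ) + (m : ℝ))

lemma node_sum {V : Type*} [DecidableEq V] (n m : ℕ) (Hset : Finset V) (T : Fin m → V × V × V)
    (x : Fin m ⊕ Unit → ℝ) (h : {h : V // h ∈ Hset}) :
    ∑ j, gadgetVal n m Hset T (Sum.inl h) j * x j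
      = rc n * (∑ j ∈ Finset.univ.filter (fun j => memEdge h.1 (T j)), x (Sum.inl j))
        + cc n * (∑ j ∈ Finset.univ.filter (fun j => ¬ memEdge h.1 (T j)), x (Sum.inl j))
        + qc n m * x (Sum.inr ()) := by
  rw [Fintype.sum_sum_type]
  have h1 : ∑ j : Fin m, gadgetVal n m Hset T (Sum.inl h) (Sum.inl j) * x (Sum.inl j)
      = rc n * (∑ j ∈ Finset.univ.filter (fun j => memEdge h.1 (T j)), x (Sum.inl j))
        + cc n * (∑ j ∈ Finset.univ.filter (fun j => ¬ memEdge h.1 (T j)), x (Sum.inl j)) := by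
    rw [← Finset.sum_filter_add_sum_filter_not Finset.univ (fun j => memEdge h.1 (T j))
        (fun j => gadgetVal n m Hset T (Sum.inl h) (Sum.inl j) * x (Sum.inl j)),
      Finset.mul_sum, Finset.mul_sum]
    congr 1
    · refine Finset.sum_congr rfl fun j hj => ?_
      simp only [Finset.mem_filter] at hj
      simp [gadgetVal, hj.2, rc]
    · refine Finset.sum_congr rfl fun j hj => ?_
      simp only [Finset.mem_filter] at hj
      simp [gadgetVal, hj.2, cc]
  rw [h1]
  congr 1
  simp [gadgetVal, qc]

lemma edge_sum {V : Type*} [DecidableEq V] (n m : ℕ) (Hset : Finset V) (T : Fin m → V × V × V)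
    (x : Fin m ⊕ Unit → ℝ) (e : Fin m) :
    ∑ j, gadgetVal n m Hset T (Sum.inr e) j * x j
      = ((n : ℝ) / (4 * (n : ℝ) - 1)) * x (Sum.inl e) + qc n m * x (Sum.inr ()) := by
  rw [Fintype.sum_sum_type]
  have h1 : ∑ j : Fin m, gadgetVal n m Hset T (Sum.inr e) (Sum.inl j) * x (Sum.inl j)
      = ((n : ℝ) / (4 * (n : ℝ) - 1)) * x (Sum.inl e) := by
    simp only [gadgetVal, ite_mul, zero_mul]
    rw [Finset.sum_ite_eq' Finset.univ e]
    simp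
  rw [h1]
  congr 1
  simp [gadgetVal, qc]

section Arith
variable {n : ℕ}

lemma hcast2 (hn : 1 < n) : (2:ℝ) ≤ (n:ℝ) := by exact_mod_cast hn

lemma Dpos (hn : 1 < n) : (0:ℝ) < 8*(n:ℝ)*((n:ℝ)-1)*(4*(n:ℝ)-1) := by
  have h1 := hcast2 hn
  have := mul_pos (mul_pos (by linarith : (0:ℝ) < 8*(n:ℝ)) (by linarith : (0:ℝ) < (n:ℝ)-1))
    (by linarith : (0:ℝ) < 4*(n:ℝ)-1)
  linarith

lemma cc_eq (hn : 1 < n) :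
    cc n = (8*(n:ℝ)^2 - 10*(n:ℝ) + 1) / (8*(n:ℝ)*((n:ℝ)-1)*(4*(n:ℝ)-1)) := by
  have h1 := hcast2 hn
  rw [cc]
  have h3 : (4*(n:ℝ) - 1) ≠ 0 := by intro h; nlinarith
  have h4 : (4*(n:ℝ)) ≠ 0 := by intro h; nlinarith
  have h5 : ((n:ℝ) - 1) ≠ 0 := by intro h; nlinarith
  field_simp
  ring

lemma rc_pos (hn : 1 < n) : 0 < rc n := by
  have h1 := hcast2 hn
  rw [rc]
  have : (0:ℝ) < 4*(n:ℝ) - 1 := by linarith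
  positivity

lemma cc_nonneg (hn : 1 < n) : 0 ≤ cc n := by
  have h1 := hcast2 hn
  have h2 := Dpos hn
  rw [cc_eq hn]
  apply div_nonneg _ h2.le
  nlinarith

lemma key_identity (hn : 1 < n) :
    4 * (n:ℝ) * cc n = 1 - 1/(2*((n:ℝ)-1)*(4*(n:ℝ)-1)) := by
  have h1 := hcast2 hn
  rw [cc]
  field_simp

lemma rc_sub_cc_pos (hn : 1 < n) : 0 < rc n - cc n := by
  have h1 := hcast2 hn
  rw [rc, cc_eq hn]
  have h2 := Dpos hn
  have h3 : (0:ℝ) < 4*(n:ℝ) - 1 := by linarith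
  rw [div_sub_div _ _ (ne_of_gt h3) (ne_of_gt h2)]
  apply div_pos
  · nlinarith
  · positivity

lemma rc_sub_cc_lt (hn : 1 < n) :
    rc n - cc n < 1/(2*((n:ℝ)-1)*(4*(n:ℝ)-1)) := by
  have h1 := hcast2 hn
  rw [rc, cc_eq hn]
  have h2 := Dpos hn
  have h3 : (0:ℝ) < 4*(n:ℝ) - 1 := by linarith
  have h6 : (0:ℝ) < 2*((n:ℝ)-1)*(4*(n:ℝ)-1) := by nlinarith
  rw [div_sub_div _ _ (ne_of_gt h3) (ne_of_gt h2), div_lt_div_iff₀ (by positivity) h6]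
  nlinarith

lemma backward_node (hn : 1 < n) : 1 < 4 * rc n + 4*((n:ℝ)-1) * cc n := by
  have h1 := hcast2 hn
  rw [rc, cc_eq hn]
  have h2 := Dpos hn
  have h3 : (0:ℝ) < 4*(n:ℝ) - 1 := by linarith
  rw [mul_one_div, ← mul_div_assoc, div_add_div _ _ (ne_of_gt h3) (ne_of_gt h2),
    lt_div_iff₀ (by positivity)]
  nlinarith

end Arith

lemma filter_card_of_existsUnique {α : Type*} [DecidableEq α] {s : Finset α} {p : α → Prop}
    [DecidablePred p] (h : ∃! a, a ∈ s ∧ p a) : (s.filter p).card = 1 := by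
  obtain ⟨a, ⟨ha, hpa⟩, huniq⟩ := h
  rw [Finset.card_eq_one]
  refine ⟨a, ?_⟩
  ext b
  simp only [Finset.mem_filter, Finset.mem_singleton]
  constructor
  · intro hb; exact huniq b hb
  · rintro rfl; exact ⟨ha, hpa⟩

set_option maxHeartbeats 2000000 in
/-- In the 3DM-gadget NTU LP game, a (nonempty) blocking coalition against the
all-ones utility vector exists if and only if the hypergraph `(H, T)` contains a
three-dimensional perfect matching. -/
theorem gadget_blocking_iff_3dm {V : Type*} [DecidableEq V] (n m : ℕ)
    (hn : 1 < n) (hnm : n ≤ m)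
    (hineq : 1 / (3 * (n : ℝ) + (m : ℝ)) <
      (1 / (4 * (n : ℝ))) * (1 - 1 / (2 * ((n : ℝ) - 1) * (4 * (n : ℝ) - 1))))
    (Xs Ys Zs : Finset V) (hX : Xs.card = n) (hY : Ys.card = n) (hZ : Zs.card = n)
    (hXY : Disjoint Xs Ys) (hXZ : Disjoint Xs Zs) (hYZ : Disjoint Ys Zs)
    (T : Fin m → V × V × V)
    (hT : ∀ e : Fin m, (T e).1 ∈ Xs ∧ (T e).2.1 ∈ Ys ∧ (T e).2.2 ∈ Zs) :
    (∃ S : Finset ({h : V // h ∈ Xs ∪ Ys ∪ Zs} ⊕ Fin m),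
        S.Nonempty ∧ blocksAllOnes n m (Xs ∪ Ys ∪ Zs) T S) ↔
      (∃ T' : Finset (Fin m), T'.card = n ∧
        ∀ h ∈ Xs ∪ Ys ∪ Zs, ∃! e : Fin m, e ∈ T' ∧ memEdge h (T e)) := by
  have hn2 : (2:ℝ) ≤ (n:ℝ) := hcast2 hn
  have hmR : (n:ℝ) ≤ (m:ℝ) := by exact_mod_cast hnm
  have h4n1 : (0:ℝ) < 4*(n:ℝ) - 1 := by linarith
  have npos : (0:ℝ) < (n:ℝ) := by linarith
  have h3nm : (0:ℝ) < 3*(n:ℝ) + (m:ℝ) := by linarith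
  have hHcard : (Xs ∪ Ys ∪ Zs).card = 3 * n := by
    rw [card_union_of_disjoint (by rw [disjoint_union_left]; exact ⟨hXZ, hYZ⟩),
        card_union_of_disjoint hXY, hX, hY, hZ]
    omega
  constructor
  · -- forward direction: blocking coalition gives a perfect matching
    rintro ⟨S, hSne, x, hx0, hxsum, hu⟩
    have hnode : ∀ h : {h : V // h ∈ Xs ∪ Ys ∪ Zs}, Sum.inl h ∈ S →
        1 < rc n * (∑ j ∈ Finset.univ.filter (fun j => memEdge h.1 (T j)), x (Sum.inl j))
          + cc n * (∑ j ∈ Finset.univ.filter (fun j => ¬ memEdge h.1 (T j)), x (Sum.inl j))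
          + qc n m * x (Sum.inr ()) := by
      intro h hh
      have := hu _ hh
      rwa [node_sum] at this
    have hedge : ∀ e : Fin m, Sum.inr e ∈ S →
        1 < (n:ℝ)/(4*(n:ℝ)-1) * x (Sum.inl e) + qc n m * x (Sum.inr ()) := by
      intro e he
      have := hu _ he
      rwa [edge_sum] at this
    set ES := S.toRight with hES
    set y := ∑ j : Fin m, x (Sum.inl j) with hy
    set z := x (Sum.inr ()) with hz
    have hy0 : 0 ≤ y := Finset.sum_nonneg fun j _ => hx0 _
    have hz0 : 0 ≤ z := hx0 _
    have hyz : y + z ≤ (S.card : ℝ) := by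
      have hsplit : ∑ j, x j = y + z := by
        rw [hy, hz, Fintype.sum_sum_type]
        simp
      rw [hsplit] at hxsum
      exact hxsum
    have hScard_le : S.card ≤ 3*n + m := by
      calc S.card ≤ Fintype.card ({h : V // h ∈ Xs ∪ Ys ∪ Zs} ⊕ Fin m) := Finset.card_le_univ S
        _ = 3*n + m := by rw [Fintype.card_sum, Fintype.card_coe, Fintype.card_fin, hHcard]
    have hScard_leR : (S.card : ℝ) ≤ 3*(n:ℝ) + (m:ℝ) := by
      have := (Nat.cast_le (α := ℝ)).mpr hScard_le
      push_cast at this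
      linarith
    have hq_pos : 0 < qc n m := by rw [qc]; positivity
    have hqS : qc n m * (S.card : ℝ) ≤ 1 := by
      rw [qc, div_mul_eq_mul_div, one_mul, div_le_one h3nm]
      exact hScard_leR
    have hzS : z ≤ (S.card : ℝ) := by linarith
    have hqz_le : qc n m * z ≤ 1 :=
      le_trans (mul_le_mul_of_nonneg_left hzS hq_pos.le) hqS
    -- Step A : there is a node player in S
    have hASne : S.toLeft.Nonempty := by
      by_contra hA
      rw [Finset.not_nonempty_iff_eq_empty] at hA
      have hcards := Finset.card_toLeft_add_card_toRight (u := S)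
      rw [hA, Finset.card_empty, zero_add] at hcards
      have hESne : ES.Nonempty := by
        rw [← Finset.card_pos, hES, hcards, Finset.card_pos]
        exact hSne
      have h1 : (ES.card : ℝ) < ∑ e ∈ ES, ((n:ℝ)/(4*(n:ℝ)-1) * x (Sum.inl e) + qc n m * z) := by
        calc (ES.card : ℝ) = ∑ _e ∈ ES, (1:ℝ) := by
              rw [Finset.sum_const, nsmul_eq_mul, mul_one]
          _ < _ := Finset.sum_lt_sum_of_nonempty hESne
              (fun e he => hedge e (Finset.mem_toRight.mp he))
      have h2 : ∑ e ∈ ES, ((n:ℝ)/(4*(n:ℝ)-1) * x (Sum.inl e) + qc n m * z)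
          = (n:ℝ)/(4*(n:ℝ)-1) * (∑ e ∈ ES, x (Sum.inl e)) + (ES.card : ℝ) * (qc n m * z) := by
        rw [Finset.sum_add_distrib, ← Finset.mul_sum, Finset.sum_const, nsmul_eq_mul]
      have hsub : ∑ e ∈ ES, x (Sum.inl e) ≤ y :=
        Finset.sum_le_sum_of_subset_of_nonneg (Finset.subset_univ _) (fun j _ _ => hx0 _)
      have hsub0 : 0 ≤ ∑ e ∈ ES, x (Sum.inl e) := Finset.sum_nonneg fun j _ => hx0 _
      have hnr1 : (n:ℝ)/(4*(n:ℝ)-1) ≤ 1 := by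
        rw [div_le_one h4n1]; linarith
      have hnr0 : 0 ≤ (n:ℝ)/(4*(n:ℝ)-1) := by positivity
      have hterm1 : (n:ℝ)/(4*(n:ℝ)-1) * (∑ e ∈ ES, x (Sum.inl e)) ≤ y := by
        calc (n:ℝ)/(4*(n:ℝ)-1) * (∑ e ∈ ES, x (Sum.inl e))
            ≤ 1 * (∑ e ∈ ES, x (Sum.inl e)) := mul_le_mul_of_nonneg_right hnr1 hsub0
          _ = ∑ e ∈ ES, x (Sum.inl e) := one_mul _
          _ ≤ y := hsub
      have hEm : (ES.card : ℝ) ≤ (m:ℝ) := by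
        have : ES.card ≤ m := le_trans (Finset.card_le_univ ES) (by simp)
        exact_mod_cast this
      have hqE : qc n m * (ES.card : ℝ) ≤ 1 := by
        rw [qc, div_mul_eq_mul_div, one_mul, div_le_one h3nm]
        linarith
      have hterm2 : (ES.card : ℝ) * (qc n m * z) ≤ z := by
        have h5 : (ES.card : ℝ) * (qc n m * z) = (qc n m * (ES.card : ℝ)) * z := by ring
        rw [h5]
        calc (qc n m * (ES.card : ℝ)) * z ≤ 1 * z :=
              mul_le_mul_of_nonneg_right hqE hz0
          _ = z := one_mul z
      have hEcS' : ES.card = S.card := by rw [hES]; exact hcards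
      have hEcS : (ES.card : ℝ) = (S.card : ℝ) := by exact_mod_cast hEcS'
      rw [h2] at h1
      linarith
    obtain ⟨h₀, hh₀⟩ := hASne
    -- node inequalities in convenient form
    set W : {h : V // h ∈ Xs ∪ Ys ∪ Zs} → ℝ :=
      fun h => ∑ j ∈ Finset.univ.filter (fun j => memEdge h.1 (T j)), x (Sum.inl j) with hW
    have hW_nonneg : ∀ h, 0 ≤ W h := fun h => Finset.sum_nonneg fun j _ => hx0 _
    have hW_le : ∀ h, W h ≤ y := fun h =>
      Finset.sum_le_sum_of_subset_of_nonneg (Finset.filter_subset _ _) (fun j _ _ => hx0 _)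
    set t := 1 - qc n m * z with ht
    have hnode' : ∀ h : {h : V // h ∈ Xs ∪ Ys ∪ Zs}, Sum.inl h ∈ S →
        t < rc n * W h + cc n * (y - W h) := by
      intro h hh
      have h1 := hnode h hh
      have h2 : W h + (∑ j ∈ Finset.univ.filter (fun j => ¬ memEdge h.1 (T j)), x (Sum.inl j))
          = y := by
        rw [hW, hy]
        exact Finset.sum_filter_add_sum_filter_not _ _ _
      have h3 : y - W h
          = ∑ j ∈ Finset.univ.filter (fun j => ¬ memEdge h.1 (T j)), x (Sum.inl j) := by
        linarith
      rw [h3, ht]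
      have : rc n * W h = rc n * (∑ j ∈ Finset.univ.filter (fun j => memEdge h.1 (T j)),
          x (Sum.inl j)) := by rw [hW]
      rw [this]
      linarith
    have ht_nonneg : 0 ≤ t := by rw [ht]; linarith
    have hyt : y ≤ t * (S.card : ℝ) := by
      have hzqS : qc n m * z * (S.card : ℝ) ≤ z := by
        have h5 : qc n m * z * (S.card : ℝ) = (qc n m * (S.card : ℝ)) * z := by ring
        rw [h5]
        calc (qc n m * (S.card : ℝ)) * z ≤ 1 * z := mul_le_mul_of_nonneg_right hqS hz0
          _ = z := one_mul z
      have hexp : t * (S.card : ℝ) = (S.card : ℝ) - qc n m * z * (S.card : ℝ) := by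
        rw [ht]; ring
      linarith
    have h3' : t < rc n * y := by
      have h1 := hnode' h₀ (Finset.mem_toLeft.mp hh₀)
      have h2 : rc n * W h₀ + cc n * (y - W h₀) ≤ rc n * y := by
        nlinarith [mul_nonneg (rc_sub_cc_pos hn).le (sub_nonneg.mpr (hW_le h₀))]
      linarith
    have ht_pos : 0 < t := by
      rcases ht_nonneg.lt_or_eq with h | h
      · exact h
      · exfalso
        have hy_le0 : y ≤ 0 := by
          rw [← h, zero_mul] at hyt
          exact hyt
        nlinarith [rc_pos hn]
    have hScard4R : 4*(n:ℝ) - 1 < (S.card : ℝ) := by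
      have h1 : rc n * y ≤ rc n * (t * (S.card : ℝ)) :=
        mul_le_mul_of_nonneg_left hyt (rc_pos hn).le
      have h2 : t < rc n * (t * (S.card : ℝ)) := lt_of_lt_of_le h3' h1
      rw [rc, one_div, inv_mul_eq_div, lt_div_iff₀ h4n1] at h2
      have h3 : t * (4*(n:ℝ)-1) < t * (S.card : ℝ) := by linarith
      exact lt_of_mul_lt_mul_left (by linarith) ht_pos.le
    have hScard4 : 4*n ≤ S.card := by
      by_contra hlt
      push_neg at hlt
      have h1 : S.card + 1 ≤ 4*n := hlt
      have h2 : (S.card : ℝ) + 1 ≤ 4*(n:ℝ) := by exact_mod_cast h1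
      linarith
    -- edge player lower bounds
    have hedge' : ∀ e ∈ ES, t * (4*(n:ℝ)-1) ≤ (n:ℝ) * x (Sum.inl e) := by
      intro e he
      have h1 := hedge e (Finset.mem_toRight.mp he)
      have h2 : t < (n:ℝ)/(4*(n:ℝ)-1) * x (Sum.inl e) := by
        rw [ht]; linarith
      rw [div_mul_eq_mul_div, lt_div_iff₀ h4n1] at h2
      linarith
    have hESsum : (ES.card : ℝ) * (t * (4*(n:ℝ)-1)) ≤ (n:ℝ) * (∑ e ∈ ES, x (Sum.inl e)) := by
      rw [Finset.mul_sum]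
      calc (ES.card : ℝ) * (t * (4*(n:ℝ)-1)) = ∑ _e ∈ ES, (t * (4*(n:ℝ)-1)) := by
            rw [Finset.sum_const, nsmul_eq_mul]
        _ ≤ ∑ e ∈ ES, (n:ℝ) * x (Sum.inl e) := Finset.sum_le_sum hedge'
    have hsubES : ∑ e ∈ ES, x (Sum.inl e) ≤ y :=
      Finset.sum_le_sum_of_subset_of_nonneg (Finset.subset_univ _) (fun j _ _ => hx0 _)
    have hAS3n : S.toLeft.card ≤ 3*n := by
      calc S.toLeft.card ≤ Fintype.card {h : V // h ∈ Xs ∪ Ys ∪ Zs} := Finset.card_le_univ _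
        _ = 3*n := by rw [Fintype.card_coe, hHcard]
    have hcardsplit : S.card = S.toLeft.card + ES.card :=
      (Finset.card_toLeft_add_card_toRight (u := S)).symm
    have hEScard_le : ES.card ≤ n := by
      by_contra hgt
      push_neg at hgt
      have hb : (n:ℝ) + 1 ≤ (ES.card : ℝ) := by exact_mod_cast hgt
      have hSc : (S.card : ℝ) ≤ 3*(n:ℝ) + (ES.card : ℝ) := by
        have : S.card ≤ 3*n + ES.card := by omega
        exact_mod_cast this
      have c0 : (n:ℝ) * (∑ e ∈ ES, x (Sum.inl e)) ≤ (n:ℝ) * y :=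
        mul_le_mul_of_nonneg_left hsubES npos.le
      have c1 : (n:ℝ) * y ≤ (n:ℝ) * (t * (S.card : ℝ)) :=
        mul_le_mul_of_nonneg_left hyt npos.le
      have c2 : (ES.card : ℝ) * (4*(n:ℝ)-1) ≤ (n:ℝ) * (S.card : ℝ) := by
        have e1 : t * ((ES.card : ℝ) * (4*(n:ℝ)-1)) = (ES.card : ℝ) * (t * (4*(n:ℝ)-1)) := by
          ring
        have e2 : t * ((n:ℝ) * (S.card : ℝ)) = (n:ℝ) * (t * (S.card : ℝ)) := by ring
        have : t * ((ES.card : ℝ) * (4*(n:ℝ)-1)) ≤ t * ((n:ℝ) * (S.card : ℝ)) := by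
          rw [e1, e2]; linarith
        exact le_of_mul_le_mul_left this ht_pos
      nlinarith [mul_le_mul_of_nonneg_right hb (by linarith : (0:ℝ) ≤ 3*(n:ℝ)-1),
        mul_le_mul_of_nonneg_left hSc npos.le]
    have hcards2 : S.toLeft.card = 3*n ∧ ES.card = n := by
      constructor <;> omega
    have hASuniv : S.toLeft = Finset.univ := by
      apply Finset.eq_univ_of_card
      rw [hcards2.1, Fintype.card_coe, hHcard]
    have hmemS : ∀ h : {h : V // h ∈ Xs ∪ Ys ∪ Zs}, Sum.inl h ∈ S := fun h =>
      Finset.mem_toLeft.mp (hASuniv ▸ Finset.mem_univ h)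
    have hScard_eq : (S.card : ℝ) = 4*(n:ℝ) := by
      have : S.card = 4*n := by omega
      rw [this]; push_cast; ring
    have hyt4 : y ≤ t * (4*(n:ℝ)) := by rw [← hScard_eq]; exact hyt
    -- every node gets more than t from its incident edges
    have hWt : ∀ h : {h : V // h ∈ Xs ∪ Ys ∪ Zs}, t < W h := by
      intro h
      have h1 := hnode' h (hmemS h)
      have hkey := key_identity hn
      have h5 := rc_sub_cc_lt hn
      have h6 := rc_sub_cc_pos hn
      have hcc := cc_nonneg hn
      have e1 : cc n * y ≤ cc n * (t * (4*(n:ℝ))) := mul_le_mul_of_nonneg_left hyt4 hcc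
      have e2 : t - cc n * (t * (4*(n:ℝ))) = t * (1/(2*((n:ℝ)-1)*(4*(n:ℝ)-1))) := by
        have e2' : t - cc n * (t * (4*(n:ℝ))) = t * (1 - 4*(n:ℝ)*cc n) := by ring
        rw [e2', hkey]
        ring
      have e3 : t * (rc n - cc n) < t * (1/(2*((n:ℝ)-1)*(4*(n:ℝ)-1))) :=
        mul_lt_mul_of_pos_left h5 ht_pos
      have e4 : (rc n - cc n) * t < (rc n - cc n) * W h := by nlinarith
      exact lt_of_mul_lt_mul_left e4 h6.le
    have hESsum' : t * (4*(n:ℝ)-1) ≤ ∑ e ∈ ES, x (Sum.inl e) := by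
      have hESn : (ES.card : ℝ) = (n:ℝ) := by exact_mod_cast hcards2.2
      rw [hESn] at hESsum
      have h1 : (n:ℝ) * (t * (4*(n:ℝ)-1)) ≤ (n:ℝ) * (∑ e ∈ ES, x (Sum.inl e)) := by
        linarith
      exact le_of_mul_le_mul_left h1 npos
    -- coverage : every node is covered by an edge of ES
    have hcov : ∀ h : {h : V // h ∈ Xs ∪ Ys ∪ Zs},
        (ES.filter (fun e => memEdge h.1 (T e))).Nonempty := by
      intro h
      have hsplit :
          (∑ j ∈ (Finset.univ.filter (fun j => memEdge h.1 (T j))) ∪ ES, x (Sum.inl j))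
            + (∑ j ∈ (Finset.univ.filter (fun j => memEdge h.1 (T j))) ∩ ES, x (Sum.inl j))
          = W h + ∑ e ∈ ES, x (Sum.inl e) := by
        rw [hW]
        exact Finset.sum_union_inter
      have h1 : ∑ j ∈ (Finset.univ.filter (fun j => memEdge h.1 (T j))) ∪ ES, x (Sum.inl j)
          ≤ y :=
        Finset.sum_le_sum_of_subset_of_nonneg (Finset.subset_univ _) (fun j _ _ => hx0 _)
      have h2 : 0 < ∑ j ∈ (Finset.univ.filter (fun j => memEdge h.1 (T j))) ∩ ES,
          x (Sum.inl j) := by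
        have := hWt h
        linarith
      have h3 : ((Finset.univ.filter (fun j => memEdge h.1 (T j))) ∩ ES).Nonempty := by
        by_contra hcon
        rw [Finset.not_nonempty_iff_eq_empty] at hcon
        rw [hcon, Finset.sum_empty] at h2
        exact lt_irrefl 0 h2
      obtain ⟨e, he⟩ := h3
      rw [Finset.mem_inter] at he
      exact ⟨e, Finset.mem_filter.mpr ⟨he.2, (Finset.mem_filter.mp he.1).2⟩⟩
    -- counting argument
    have hcount3 : ∀ e : Fin m,
        ((Xs ∪ Ys ∪ Zs).filter (fun v => memEdge v (T e))).card = 3 := by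
      intro e
      obtain ⟨hx1, hy1, hz1⟩ := hT e
      have hset : (Xs ∪ Ys ∪ Zs).filter (fun v => memEdge v (T e))
          = {(T e).1, (T e).2.1, (T e).2.2} := by
        ext v
        rw [Finset.mem_filter]
        simp only [Finset.mem_insert, Finset.mem_singleton, memEdge]
        constructor
        · rintro ⟨_, hc⟩; exact hc
        · rintro (rfl | rfl | rfl)
          · exact ⟨Finset.mem_union_left _ (Finset.mem_union_left _ hx1), Or.inl rfl⟩
          · exact ⟨Finset.mem_union_left _ (Finset.mem_union_right _ hy1),
              Or.inr (Or.inl rfl)⟩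
          · exact ⟨Finset.mem_union_right _ hz1, Or.inr (Or.inr rfl)⟩
      rw [hset]
      have d12 : (T e).1 ≠ (T e).2.1 := fun hq =>
        Finset.disjoint_left.mp hXY hx1 (hq ▸ hy1)
      have d13 : (T e).1 ≠ (T e).2.2 := fun hq =>
        Finset.disjoint_left.mp hXZ hx1 (hq ▸ hz1)
      have d23 : (T e).2.1 ≠ (T e).2.2 := fun hq =>
        Finset.disjoint_left.mp hYZ hy1 (hq ▸ hz1)
      rw [Finset.card_insert_of_notMem (by simp [d12, d13]),
        Finset.card_insert_of_notMem (by simp [d23]), Finset.card_singleton]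
    have hdouble : ∑ h ∈ Xs ∪ Ys ∪ Zs, (ES.filter (fun e => memEdge h (T e))).card = 3*n := by
      calc ∑ h ∈ Xs ∪ Ys ∪ Zs, (ES.filter (fun e => memEdge h (T e))).card
          = ∑ h ∈ Xs ∪ Ys ∪ Zs, ∑ e ∈ ES, (if memEdge h (T e) then 1 else 0) := by
            refine Finset.sum_congr rfl fun h _ => ?_
            rw [Finset.card_filter]
        _ = ∑ e ∈ ES, ∑ h ∈ Xs ∪ Ys ∪ Zs, (if memEdge h (T e) then 1 else 0) :=
            Finset.sum_comm
        _ = ∑ e ∈ ES, ((Xs ∪ Ys ∪ Zs).filter (fun v => memEdge v (T e))).card := by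
            refine Finset.sum_congr rfl fun e _ => ?_
            rw [Finset.card_filter]
        _ = ∑ _e ∈ ES, 3 := Finset.sum_congr rfl fun e _ => hcount3 e
        _ = 3*n := by
            rw [Finset.sum_const, hcards2.2, smul_eq_mul]
            omega
    have hone : ∀ h ∈ Xs ∪ Ys ∪ Zs, (ES.filter (fun e => memEdge h (T e))).card = 1 := by
      have hle : ∀ h ∈ Xs ∪ Ys ∪ Zs, 1 ≤ (ES.filter (fun e => memEdge h (T e))).card := by
        intro h hh
        exact Finset.card_pos.mpr (hcov ⟨h, hh⟩)
      have hsum1 : ∑ _h ∈ Xs ∪ Ys ∪ Zs, 1 = 3*n := by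
        rw [Finset.sum_const, hHcard, smul_eq_mul, mul_one]
      have := (Finset.sum_eq_sum_iff_of_le hle).mp (hsum1.trans hdouble.symm)
      intro h hh
      exact (this h hh).symm
    refine ⟨ES, hcards2.2, fun h hh => ?_⟩
    obtain ⟨e, he⟩ := Finset.card_eq_one.mp (hone h hh)
    refine ⟨e, ?_, ?_⟩
    · have hmem : e ∈ ES.filter (fun e => memEdge h (T e)) := by
        rw [he]; exact Finset.mem_singleton_self e
      have := Finset.mem_filter.mp hmem
      exact ⟨this.1, this.2⟩
    · intro e' he'
      have hmem : e' ∈ ES.filter (fun e => memEdge h (T e)) :=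
        Finset.mem_filter.mpr ⟨he'.1, he'.2⟩
      rw [he] at hmem
      exact Finset.mem_singleton.mp hmem
  · -- backward direction: perfect matching gives a blocking coalition
    rintro ⟨T', hT'card, hT'⟩
    have hT'ne : T'.Nonempty := Finset.card_pos.mp (by rw [hT'card]; omega)
    refine ⟨(Finset.univ : Finset {h : V // h ∈ Xs ∪ Ys ∪ Zs}).disjSum T', ?_, ?_⟩
    · obtain ⟨e, he⟩ := hT'ne
      exact ⟨Sum.inr e, Finset.inr_mem_disjSum.mpr he⟩
    · have hcardS : ((Finset.univ : Finset {h : V // h ∈ Xs ∪ Ys ∪ Zs}).disjSum T').card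
          = 4 * n := by
        rw [Finset.card_disjSum, Finset.card_univ, Fintype.card_coe, hHcard, hT'card]; omega
      refine ⟨fun j => Sum.elim (fun e => if e ∈ T' then (4:ℝ) else 0) (fun _ => 0) j,
        ?_, ?_, ?_⟩
      · rintro (j | j)
        · dsimp; split <;> norm_num
        · dsimp; exact le_refl 0
      · rw [hcardS, Fintype.sum_sum_type]
        simp only [Sum.elim_inl, Sum.elim_inr]
        rw [← Finset.sum_filter, Finset.filter_univ_mem, Finset.sum_const, hT'card,
          nsmul_eq_mul]
        push_cast
        simp
        linarith
      · rintro (h | e) hi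
        · rw [node_sum]
          simp only [Sum.elim_inl, Sum.elim_inr, mul_zero, add_zero]
          have key : ∀ (p : Fin m → Prop) (_ : DecidablePred p),
              (∑ j ∈ Finset.univ.filter p, (if j ∈ T' then (4:ℝ) else 0))
                = 4 * ((T'.filter p).card : ℝ) := by
            intro p hp
            rw [← Finset.sum_filter]
            have he : (Finset.univ.filter p).filter (· ∈ T') = T'.filter p := by
              ext j; simp [and_comm]
            rw [he, Finset.sum_const, nsmul_eq_mul, mul_comm]
          rw [key _ inferInstance, key _ inferInstance]
          have hc1 : (T'.filter (fun e => memEdge h.1 (T e))).card = 1 :=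
            filter_card_of_existsUnique (hT' h.1 h.2)
          have hc2 : (T'.filter (fun e => ¬ memEdge h.1 (T e))).card = n - 1 := by
            have := Finset.card_filter_add_card_filter_not
              (s := T') (p := fun e => memEdge h.1 (T e))
            omega
          rw [hc1, hc2]
          have hcast : ((n - 1 : ℕ) : ℝ) = (n:ℝ) - 1 := by
            have : 1 ≤ n := hn.le
            push_cast [this]; ring
          rw [hcast]
          have := backward_node hn
          push_cast
          nlinarith [this]
        · rw [edge_sum]
          have he : e ∈ T' := Finset.inr_mem_disjSum.mp hi
          simp only [Sum.elim_inl, Sum.elim_inr, mul_zero, add_zero, if_pos he]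
          rw [div_mul_eq_mul_div, lt_div_iff₀ h4n1]
          linarith
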